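/- Let n₁, n₂, n₃ be unit vectors in ℝ³ with n_i·n_j = −1/2 for all i ≠ j (trine spin axes) and η ∈ [0,1]. The three noisy spin-1/2 observables M₁, M₂, M₃ with effects E^k_± = (1/2)(I ± η σ·n_k) are (triplewise) jointly measurable if and only if η ≤ 2/3. -/

import Mathlib

open Matrix ComplexOrder

noncomputable section

abbrev Mat2 := Matrix (Fin 2) (Fin 2) ℂ

/-- Pauli matrix σ₁. -/
def σ1 : Mat2 := !![0, 1; 1, 0]
/-- Pauli matrix σ₂. -/
def σ2 : Mat2 := !![0, -Complex.I; Complex.I, 0]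
/-- Pauli matrix σ₃. -/
def σ3 : Mat2 := !![1, 0; 0, -1]

/-- σ·a for a real 3-vector a. -/
def pauli (a : Fin 3 → ℝ) : Mat2 := (a 0 : ℂ) • σ1 + (a 1 : ℂ) • σ2 + (a 2 : ℂ) • σ3

/-- Euclidean inner product on ℝ³. -/
def dot3 (a b : Fin 3 → ℝ) : ℝ := a 0 * b 0 + a 1 * b 1 + a 2 * b 2

/-- Euclidean norm on ℝ³. -/
def norm3 (a : Fin 3 → ℝ) : ℝ := Real.sqrt (dot3 a a)

/-- A qubit effect: both `E` and `I - E` positive semidefinite. -/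
def IsEffect (E : Mat2) : Prop := E.PosSemidef ∧ (1 - E).PosSemidef

/-- A qubit density matrix. -/
def IsDensity (ρ : Mat2) : Prop := ρ.PosSemidef ∧ ρ.trace = 1

/-- E₊ = (1/2)(I + η σ·n). -/
def Epos (η : ℝ) (n : Fin 3 → ℝ) : Mat2 := (1/2 : ℂ) • (1 + (η : ℂ) • pauli n)
/-- E₋ = (1/2)(I - η σ·n). -/
def Eneg (η : ℝ) (n : Fin 3 → ℝ) : Mat2 := (1/2 : ℂ) • (1 - (η : ℂ) • pauli n)

/-- A pairwise joint measurement of the noisy spin-1/2 observables along nᵢ and nⱼ. -/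
def IsJointMmt (η : ℝ) (ni nj : Fin 3 → ℝ) (Gpp Gpm Gmp Gmm : Mat2) : Prop :=
  IsEffect Gpp ∧ IsEffect Gpm ∧ IsEffect Gmp ∧ IsEffect Gmm ∧
  Gpp + Gpm = Epos η ni ∧ Gmp + Gmm = Eneg η ni ∧
  Gpp + Gmp = Epos η nj ∧ Gpm + Gmm = Eneg η nj

/-- Average anticorrelation probability R₃(ρ), given the anticorrelation effects of the
three pairwise joint measurements. -/
def R3 (ρ G12pm G12mp G13pm G13mp G23pm G23mp : Mat2) : ℝ :=
  (1/3) * ((ρ * (G12pm + G12mp)).trace.re + (ρ * (G13pm + G13mp)).trace.re +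
    (ρ * (G23pm + G23mp)).trace.re)

/-- Parametric joint-measurement family. -/
def Gpp (η : ℝ) (ni nj : Fin 3 → ℝ) (α : ℝ) (a : Fin 3 → ℝ) : Mat2 :=
  (1/2 : ℂ) • (((α/2 : ℝ) : ℂ) • (1 : Mat2) + pauli ((1/2 : ℝ) • (η • (ni + nj) - a)))
def Gpm (η : ℝ) (ni nj : Fin 3 → ℝ) (α : ℝ) (a : Fin 3 → ℝ) : Mat2 :=
  (1/2 : ℂ) • (((1 - α/2 : ℝ) : ℂ) • (1 : Mat2) + pauli ((1/2 : ℝ) • (η • (ni - nj) + a)))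
def Gmp (η : ℝ) (ni nj : Fin 3 → ℝ) (α : ℝ) (a : Fin 3 → ℝ) : Mat2 :=
  (1/2 : ℂ) • (((1 - α/2 : ℝ) : ℂ) • (1 : Mat2) + pauli ((1/2 : ℝ) • (-(η • ni) + η • nj + a)))
def Gmm (η : ℝ) (ni nj : Fin 3 → ℝ) (α : ℝ) (a : Fin 3 → ℝ) : Mat2 :=
  (1/2 : ℂ) • (((α/2 : ℝ) : ℂ) • (1 : Mat2) + pauli ((1/2 : ℝ) • (-(η • (ni + nj)) - a)))

/-- Trine directions in the ZX plane. -/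
def tn1 : Fin 3 → ℝ := ![0, 0, 1]
def tn2 : Fin 3 → ℝ := ![Real.sqrt 3 / 2, 0, -(1/2)]
def tn3 : Fin 3 → ℝ := ![-(Real.sqrt 3 / 2), 0, -(1/2)]

/-- sign of a Boolean, as ±1. -/
def sgn (b : Bool) : ℝ := if b then 1 else -1

/-- m_X = Σₖ Xₖ nₖ. -/
def mvec {N : ℕ} (n : Fin N → Fin 3 → ℝ) (X : Fin N → Bool) : Fin 3 → ℝ :=
  ∑ k, sgn (X k) • n k

/-- Joint measurability of the N noisy qubit observables. -/
def JointlyMeasurable {N : ℕ} (η : ℝ) (n : Fin N → Fin 3 → ℝ) : Prop :=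
  ∃ E : (Fin N → Bool) → Mat2,
    (∀ X, IsEffect (E X)) ∧ (∑ X, E X) = 1 ∧
    (∀ k, ∑ X ∈ Finset.univ.filter (fun X => X k = true), E X = Epos η (n k)) ∧
    (∀ k, ∑ X ∈ Finset.univ.filter (fun X => X k = false), E X = Eneg η (n k))

/-! ### Auxiliary lemmas -/

lemma pauli_apply (a : Fin 3 → ℝ) :
    pauli a = !![(a 2 : ℂ), a 0 - a 1 * Complex.I; a 0 + a 1 * Complex.I, -(a 2 : ℂ)] := by
  ext i j
  fin_cases i <;> fin_cases j <;>
    simp [pauli, σ1, σ2, σ3] <;> ring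

lemma pauli_add (a b : Fin 3 → ℝ) : pauli (a + b) = pauli a + pauli b := by
  simp only [pauli, Pi.add_apply, Complex.ofReal_add, add_smul]
  abel

lemma pauli_smul (c : ℝ) (a : Fin 3 → ℝ) : pauli (c • a) = (c : ℂ) • pauli a := by
  simp only [pauli, Pi.smul_apply, smul_eq_mul, Complex.ofReal_mul, mul_smul, smul_add]

lemma pauli_neg (a : Fin 3 → ℝ) : pauli (-a) = -pauli a := by
  have := pauli_smul (-1) a
  simpa using this

lemma pauli_zero : pauli 0 = 0 := by
  simp [pauli]

lemma trace_pauli_mul_pauli (a b : Fin 3 → ℝ) :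
    (pauli a * pauli b).trace = 2 * (dot3 a b : ℂ) := by
  simp [pauli_apply, dot3, Matrix.trace_fin_two, Matrix.mul_apply, Fin.sum_univ_two]
  push_cast
  ring_nf
  simp [Complex.I_sq]

lemma quad_key (t a0 a1 a2 u v p q : ℝ) (ht : 0 ≤ t) (h : a0^2+a1^2+a2^2 ≤ t^2) :
    0 ≤ (t+a2)*(u^2+v^2) + (t-a2)*(p^2+q^2) + 2*a0*(u*p+v*q) + 2*a1*(u*q-v*p) := by
  set w1 := 2*(u*p+v*q) with hw1
  set w2 := 2*(u*q-v*p) with hw2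
  set w3 := u^2+v^2-p^2-q^2 with hw3
  set s := u^2+v^2+p^2+q^2 with hs'
  have hs : (0:ℝ) ≤ s := by positivity
  have hW : w1^2 + w2^2 + w3^2 = s^2 := by rw [hw1, hw2, hw3, hs']; ring
  have hCS : (a0*w1 + a1*w2 + a2*w3)^2 ≤ (a0^2+a1^2+a2^2) * (w1^2+w2^2+w3^2) := by
    nlinarith [sq_nonneg (a0*w2 - a1*w1), sq_nonneg (a0*w3 - a2*w1), sq_nonneg (a1*w3 - a2*w2)]
  have h2 : (a0*w1 + a1*w2 + a2*w3)^2 ≤ (t*s)^2 := by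
    calc (a0*w1 + a1*w2 + a2*w3)^2 ≤ (a0^2+a1^2+a2^2) * (w1^2+w2^2+w3^2) := hCS
    _ ≤ t^2 * s^2 := by rw [hW]; apply mul_le_mul_of_nonneg_right h (by positivity)
    _ = (t*s)^2 := by ring
  have h3 : -(t*s) ≤ a0*w1 + a1*w2 + a2*w3 := by
    nlinarith [mul_nonneg ht hs]
  have : (t+a2)*(u^2+v^2) + (t-a2)*(p^2+q^2) + 2*a0*(u*p+v*q) + 2*a1*(u*q-v*p)
      = t*s + (a0*w1 + a1*w2 + a2*w3) := by rw [hw1, hw2, hw3, hs']; ring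
  rw [this]; linarith

lemma psd_smul_one_add_pauli (t : ℝ) (ht : 0 ≤ t) (a : Fin 3 → ℝ) (h : dot3 a a ≤ t ^ 2) :
    ((t : ℂ) • (1 : Mat2) + pauli a).PosSemidef := by
  refine Matrix.PosSemidef.of_dotProduct_mulVec_nonneg ?_ ?_
  · ext i j
    fin_cases i <;> fin_cases j <;>
      simp [pauli_apply, Matrix.conjTranspose_apply, Complex.ext_iff]
  · intro x
    have hx : star x ⬝ᵥ (((t : ℂ) • (1 : Mat2) + pauli a) *ᵥ x) =
        ((t + a 2 : ℂ)) * (star (x 0) * x 0) + ((t - a 2 : ℂ)) * (star (x 1) * x 1)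
        + ((a 0 : ℂ) - a 1 * Complex.I) * (star (x 0) * x 1)
        + ((a 0 : ℂ) + a 1 * Complex.I) * (star (x 1) * x 0) := by
      simp [pauli_apply, dotProduct, Matrix.mulVec, Fin.sum_univ_two, Matrix.one_apply]
      ring
    rw [hx, Complex.le_def]
    set u := (x 0).re; set v := (x 0).im; set p := (x 1).re; set q := (x 1).im
    constructor
    · simp [Complex.add_re, Complex.mul_re, Complex.mul_im, Complex.add_im, Complex.sub_re,
        Complex.sub_im, Complex.ofReal_re, Complex.ofReal_im, Complex.I_re, Complex.I_im,
        RCLike.star_def, Complex.conj_re, Complex.conj_im]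
      have key := quad_key t (a 0) (a 1) (a 2) u v p q ht (by simp only [dot3] at h; nlinarith)
      nlinarith [key]
    · simp [Complex.add_im, Complex.mul_re, Complex.mul_im, Complex.sub_re, Complex.sub_im,
        Complex.ofReal_re, Complex.ofReal_im, Complex.I_re, Complex.I_im,
        RCLike.star_def, Complex.conj_re, Complex.conj_im]
      ring

lemma isEffect_of (t : ℝ) (a : Fin 3 → ℝ) (ht0 : 0 ≤ t) (ht1 : t ≤ 1)
    (h : dot3 a a ≤ t ^ 2) (h' : dot3 a a ≤ (1 - t) ^ 2) :
    IsEffect ((t : ℂ) • (1 : Mat2) + pauli a) := by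
  constructor
  · exact psd_smul_one_add_pauli t ht0 a h
  · have hrw : (1 : Mat2) - ((t : ℂ) • (1 : Mat2) + pauli a)
        = ((1 - t : ℝ) : ℂ) • (1 : Mat2) + pauli (-a) := by
      rw [pauli_neg]; push_cast; module
    rw [hrw]
    apply psd_smul_one_add_pauli (1 - t) (by linarith) (-a)
    simpa [dot3] using h'

lemma psd_trace_nonneg {n : Type*} [Fintype n] [DecidableEq n] {A : Matrix n n ℂ}
    (hA : A.PosSemidef) : 0 ≤ A.trace := by
  rw [Matrix.trace]
  apply Finset.sum_nonneg
  intro i _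
  have h := hA.dotProduct_mulVec_nonneg (Pi.single i 1)
  simpa [Matrix.mulVec_single, dotProduct, Pi.single_apply, Matrix.diag] using h

open scoped MatrixOrder in
lemma trace_mul_nonneg {A B : Mat2} (hA : A.PosSemidef) (hB : B.PosSemidef) :
    0 ≤ (A * B).trace := by
  have hs : (CFC.sqrt A).PosSemidef := (CFC.sqrt_nonneg A).posSemidef
  have h1 : A * B = CFC.sqrt A * (CFC.sqrt A * B) := by
    rw [← mul_assoc, CFC.sqrt_mul_sqrt_self A hA.nonneg]
  rw [h1, Matrix.trace_mul_comm]
  have h2 : CFC.sqrt A * B * CFC.sqrt A = CFC.sqrt A * B * (CFC.sqrt A)ᴴ := by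
    rw [hs.isHermitian.eq]
  have h3 : (CFC.sqrt A * B * CFC.sqrt A).PosSemidef := by
    rw [h2]; exact hB.mul_mul_conjTranspose_same (CFC.sqrt A)
  exact psd_trace_nonneg h3

lemma univ_fin3_bool : (Finset.univ : Finset (Fin 3 → Bool)) =
    {![false,false,false], ![false,false,true], ![false,true,false], ![false,true,true],
     ![true,false,false], ![true,false,true], ![true,true,false], ![true,true,true]} := by
  decide

lemma sum_fin3_bool {M : Type*} [AddCommMonoid M] (f : (Fin 3 → Bool) → M) :
    ∑ X, f X = f ![false,false,false] + f ![false,false,true] + f ![false,true,false]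
      + f ![false,true,true] + f ![true,false,false] + f ![true,false,true]
      + f ![true,true,false] + f ![true,true,true] := by
  rw [univ_fin3_bool]
  rw [Finset.sum_insert (by decide), Finset.sum_insert (by decide), Finset.sum_insert (by decide),
    Finset.sum_insert (by decide), Finset.sum_insert (by decide), Finset.sum_insert (by decide),
    Finset.sum_insert (by decide), Finset.sum_singleton]
  abel


lemma dot_smul_comb (n₁ n₂ n₃ : Fin 3 → ℝ)
    (hn1 : dot3 n₁ n₁ = 1) (hn2 : dot3 n₂ n₂ = 1) (hn3 : dot3 n₃ n₃ = 1)
    (h12 : dot3 n₁ n₂ = -(1/2)) (h13 : dot3 n₁ n₃ = -(1/2)) (h23 : dot3 n₂ n₃ = -(1/2))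
    (c s0 s1 s2 : ℝ) (hs0 : s0^2 = 1) (hs1 : s1^2 = 1) (hs2 : s2^2 = 1)
    (hs : s0*s1 + s0*s2 + s1*s2 = -1) :
    dot3 (c • (s0•n₁+s1•n₂+s2•n₃)) (c • (s0•n₁+s1•n₂+s2•n₃)) = 4*c^2 := by
  simp only [dot3, Pi.smul_apply, Pi.add_apply, smul_eq_mul] at *
  linear_combination (c^2*s0^2)*hn1 + (c^2*s1^2)*hn2 + (c^2*s2^2)*hn3
    + (2*c^2*s0*s1)*h12 + (2*c^2*s0*s2)*h13 + (2*c^2*s1*s2)*h23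
    + c^2*hs0 + c^2*hs1 + c^2*hs2 - c^2*hs

lemma combine4 (c1 c2 c3 c4 : ℝ) (a1 a2 a3 a4 : Fin 3 → ℝ) :
    ((c1:ℂ) • (1:Mat2) + pauli a1) + ((c2:ℂ) • (1:Mat2) + pauli a2)
      + ((c3:ℂ) • (1:Mat2) + pauli a3) + ((c4:ℂ) • (1:Mat2) + pauli a4)
    = ((c1+c2+c3+c4 : ℝ):ℂ) • (1:Mat2) + pauli (a1+a2+a3+a4) := by
  simp only [pauli_add]
  push_cast
  module

lemma combine4r (c1 c2 c3 c4 : ℝ) (a1 a2 a3 a4 : Fin 3 → ℝ) :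
    ((c1:ℂ) • (1:Mat2) + pauli a1) + (((c2:ℂ) • (1:Mat2) + pauli a2)
      + (((c3:ℂ) • (1:Mat2) + pauli a3) + ((c4:ℂ) • (1:Mat2) + pauli a4)))
    = ((c1+c2+c3+c4 : ℝ):ℂ) • (1:Mat2) + pauli (a1+a2+a3+a4) := by
  simp only [pauli_add]
  push_cast
  module

lemma combine8 (c1 c2 c3 c4 c5 c6 c7 c8 : ℝ) (a1 a2 a3 a4 a5 a6 a7 a8 : Fin 3 → ℝ) :
    ((c1:ℂ) • (1:Mat2) + pauli a1) + ((c2:ℂ) • (1:Mat2) + pauli a2)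
      + ((c3:ℂ) • (1:Mat2) + pauli a3) + ((c4:ℂ) • (1:Mat2) + pauli a4)
      + ((c5:ℂ) • (1:Mat2) + pauli a5) + ((c6:ℂ) • (1:Mat2) + pauli a6)
      + ((c7:ℂ) • (1:Mat2) + pauli a7) + ((c8:ℂ) • (1:Mat2) + pauli a8)
    = ((c1+c2+c3+c4+c5+c6+c7+c8 : ℝ):ℂ) • (1:Mat2) + pauli (a1+a2+a3+a4+a5+a6+a7+a8) := by
  simp only [pauli_add]
  push_cast
  module

set_option maxHeartbeats 1000000 in
/-- For trine spin axes (pairwise inner products -1/2), the noisy spin-1/2 observables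
are triplewise jointly measurable iff η ≤ 2/3. -/
theorem trine_jm_iff (n₁ n₂ n₃ : Fin 3 → ℝ)
    (h1 : norm3 n₁ = 1) (h2 : norm3 n₂ = 1) (h3 : norm3 n₃ = 1)
    (h12 : dot3 n₁ n₂ = -(1/2)) (h13 : dot3 n₁ n₃ = -(1/2)) (h23 : dot3 n₂ n₃ = -(1/2))
    (η : ℝ) (hη : η ∈ Set.Icc (0 : ℝ) 1) :
    JointlyMeasurable η ![n₁, n₂, n₃] ↔ η ≤ 2/3 := by
  obtain ⟨hη0, hη1⟩ := hη
  have hd1 : (0:ℝ) ≤ dot3 n₁ n₁ := by simp only [dot3]; nlinarith [sq_nonneg (n₁ 0), sq_nonneg (n₁ 1), sq_nonneg (n₁ 2)]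
  have hd2 : (0:ℝ) ≤ dot3 n₂ n₂ := by simp only [dot3]; nlinarith [sq_nonneg (n₂ 0), sq_nonneg (n₂ 1), sq_nonneg (n₂ 2)]
  have hd3 : (0:ℝ) ≤ dot3 n₃ n₃ := by simp only [dot3]; nlinarith [sq_nonneg (n₃ 0), sq_nonneg (n₃ 1), sq_nonneg (n₃ 2)]
  have hn1 : dot3 n₁ n₁ = 1 := by
    have := Real.sq_sqrt hd1
    rw [show Real.sqrt (dot3 n₁ n₁) = 1 from h1] at this
    nlinarith [this]
  have hn2 : dot3 n₂ n₂ = 1 := by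
    have := Real.sq_sqrt hd2
    rw [show Real.sqrt (dot3 n₂ n₂) = 1 from h2] at this
    nlinarith [this]
  have hn3 : dot3 n₃ n₃ = 1 := by
    have := Real.sq_sqrt hd3
    rw [show Real.sqrt (dot3 n₃ n₃) = 1 from h3] at this
    nlinarith [this]
  constructor
  · rintro ⟨E, hEff, hSum, hPos, hNeg⟩
    have hdot : ∀ X : Fin 3 → Bool, dot3 (mvec ![n₁,n₂,n₃] X) (mvec ![n₁,n₂,n₃] X) ≤ 4 := by
      intro X
      have hmv : mvec ![n₁,n₂,n₃] X = sgn (X 0) • n₁ + sgn (X 1) • n₂ + sgn (X 2) • n₃ := by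
        simp [mvec, Fin.sum_univ_three]
      rw [hmv]
      have hn1' := hn1; have hn2' := hn2; have hn3' := hn3
      have h12' := h12; have h13' := h13; have h23' := h23
      simp only [dot3] at hn1' hn2' hn3' h12' h13' h23' ⊢
      ring_nf at hn1' hn2' hn3' h12' h13' h23'
      cases hb0 : X 0 <;> cases hb1 : X 1 <;> cases hb2 : X 2 <;>
        simp only [sgn, if_true, if_false, Pi.add_apply, Pi.smul_apply, smul_eq_mul,
          Bool.false_eq_true, ite_false, ite_true] <;>
        ring_nf <;>
        linarith [hn1', hn2', hn3', h12', h13', h23']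
    have hb : ∀ X : Fin 3 → Bool,
        ((E X) * pauli (mvec ![n₁,n₂,n₃] X)).trace ≤ 2 * (E X).trace := by
      intro X
      have hdm : dot3 (-(mvec ![n₁,n₂,n₃] X)) (-(mvec ![n₁,n₂,n₃] X)) ≤ (2:ℝ)^2 := by
        have := hdot X
        simp only [dot3, Pi.neg_apply] at this ⊢
        nlinarith [this]
      have hpsd : (((2:ℝ):ℂ) • (1:Mat2) + pauli (-(mvec ![n₁,n₂,n₃] X))).PosSemidef :=
        psd_smul_one_add_pauli 2 (by norm_num) _ hdm
      have h0 : 0 ≤ ((E X) * (((2:ℝ):ℂ) • (1:Mat2) + pauli (-(mvec ![n₁,n₂,n₃] X)))).trace :=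
        trace_mul_nonneg (hEff X).1 hpsd
      have hexp : ((E X) * (((2:ℝ):ℂ) • (1:Mat2) + pauli (-(mvec ![n₁,n₂,n₃] X)))).trace
          = 2 * (E X).trace - ((E X) * pauli (mvec ![n₁,n₂,n₃] X)).trace := by
        rw [pauli_neg]
        rw [mul_add, Matrix.trace_add, Matrix.mul_smul, mul_one, Matrix.trace_smul,
          mul_neg, Matrix.trace_neg]
        simp only [smul_eq_mul]
        push_cast
        ring
      rw [hexp] at h0
      exact sub_nonneg.mp h0
    have claim : ∀ k : Fin 3,
        (∑ X : Fin 3 → Bool, ((sgn (X k) : ℝ) : ℂ) * ((E X) * pauli (![n₁,n₂,n₃] k)).trace)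
          = (η : ℂ) * (2 * (dot3 (![n₁,n₂,n₃] k) (![n₁,n₂,n₃] k) : ℂ)) := by
      intro k
      have hsplit := Finset.sum_filter_add_sum_filter_not (Finset.univ : Finset (Fin 3 → Bool))
        (fun X => X k = true)
        (fun X => ((sgn (X k) : ℝ) : ℂ) * ((E X) * pauli (![n₁,n₂,n₃] k)).trace)
      have htrue : (∑ X ∈ Finset.univ.filter (fun X : Fin 3 → Bool => X k = true),
          ((sgn (X k) : ℝ) : ℂ) * ((E X) * pauli (![n₁,n₂,n₃] k)).trace)
          = ((Epos η (![n₁,n₂,n₃] k)) * pauli (![n₁,n₂,n₃] k)).trace := by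
        have e1 : ∀ X ∈ Finset.univ.filter (fun X : Fin 3 → Bool => X k = true),
            ((sgn (X k) : ℝ) : ℂ) * ((E X) * pauli (![n₁,n₂,n₃] k)).trace
              = ((E X) * pauli (![n₁,n₂,n₃] k)).trace := by
          intro X hX
          rw [Finset.mem_filter] at hX
          simp [sgn, hX.2]
        rw [Finset.sum_congr rfl e1, ← Matrix.trace_sum, ← Finset.sum_mul, hPos k]
      have hfalse : (∑ X ∈ Finset.univ.filter (fun X : Fin 3 → Bool => ¬ (X k = true)),
          ((sgn (X k) : ℝ) : ℂ) * ((E X) * pauli (![n₁,n₂,n₃] k)).trace)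
          = -((Eneg η (![n₁,n₂,n₃] k)) * pauli (![n₁,n₂,n₃] k)).trace := by
        have hfilt : (Finset.univ.filter (fun X : Fin 3 → Bool => ¬ (X k = true)))
            = Finset.univ.filter (fun X : Fin 3 → Bool => X k = false) := by
          apply Finset.filter_congr
          intro X _
          simp
        rw [hfilt]
        have e2 : ∀ X ∈ Finset.univ.filter (fun X : Fin 3 → Bool => X k = false),
            ((sgn (X k) : ℝ) : ℂ) * ((E X) * pauli (![n₁,n₂,n₃] k)).trace
              = -(((E X) * pauli (![n₁,n₂,n₃] k)).trace) := by
          intro X hX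
          rw [Finset.mem_filter] at hX
          simp [sgn, hX.2]
        rw [Finset.sum_congr rfl e2, Finset.sum_neg_distrib, ← Matrix.trace_sum,
          ← Finset.sum_mul, hNeg k]
      rw [← hsplit, htrue, hfalse]
      have hEminus : Epos η (![n₁,n₂,n₃] k) - Eneg η (![n₁,n₂,n₃] k)
          = (η : ℂ) • pauli (![n₁,n₂,n₃] k) := by
        simp only [Epos, Eneg]
        module
      have : (Epos η (![n₁,n₂,n₃] k)) * pauli (![n₁,n₂,n₃] k)
            - (Eneg η (![n₁,n₂,n₃] k)) * pauli (![n₁,n₂,n₃] k)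
          = ((η : ℂ) • pauli (![n₁,n₂,n₃] k)) * pauli (![n₁,n₂,n₃] k) := by
        rw [← sub_mul, hEminus]
      calc ((Epos η (![n₁,n₂,n₃] k)) * pauli (![n₁,n₂,n₃] k)).trace
            + -((Eneg η (![n₁,n₂,n₃] k)) * pauli (![n₁,n₂,n₃] k)).trace
          = ((Epos η (![n₁,n₂,n₃] k)) * pauli (![n₁,n₂,n₃] k)
            - (Eneg η (![n₁,n₂,n₃] k)) * pauli (![n₁,n₂,n₃] k)).trace := by
            rw [Matrix.trace_sub]; ring
        _ = (((η : ℂ) • pauli (![n₁,n₂,n₃] k)) * pauli (![n₁,n₂,n₃] k)).trace := by rw [this]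
        _ = (η : ℂ) * (2 * (dot3 (![n₁,n₂,n₃] k) (![n₁,n₂,n₃] k) : ℂ)) := by
            rw [Matrix.smul_mul, Matrix.trace_smul, trace_pauli_mul_pauli]
            simp [smul_eq_mul]
    have hexpand : ∀ X : Fin 3 → Bool, ((E X) * pauli (mvec ![n₁,n₂,n₃] X)).trace
        = ∑ k : Fin 3, ((sgn (X k) : ℝ) : ℂ) * ((E X) * pauli (![n₁,n₂,n₃] k)).trace := by
      intro X
      have hp : pauli (mvec ![n₁,n₂,n₃] X)
          = ∑ k : Fin 3, ((sgn (X k) : ℝ) : ℂ) • pauli (![n₁,n₂,n₃] k) := by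
        simp [mvec, Fin.sum_univ_three, pauli_add, pauli_smul]
      rw [hp, Finset.mul_sum, Matrix.trace_sum]
      refine Finset.sum_congr rfl fun k _ => ?_
      rw [Matrix.mul_smul, Matrix.trace_smul]
      simp [smul_eq_mul]
    have hTeq : (∑ X : Fin 3 → Bool, ((E X) * pauli (mvec ![n₁,n₂,n₃] X)).trace)
        = 6 * (η : ℂ) := by
      rw [Finset.sum_congr rfl (fun X _ => hexpand X), Finset.sum_comm]
      rw [Finset.sum_congr rfl (fun k _ => claim k), Fin.sum_univ_three]
      simp only [Matrix.cons_val_zero, Matrix.cons_val_one, Matrix.head_cons,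
        Matrix.cons_val_two, Matrix.tail_cons]
      rw [hn1, hn2, hn3]
      push_cast
      ring
    have hTle : (∑ X : Fin 3 → Bool, ((E X) * pauli (mvec ![n₁,n₂,n₃] X)).trace) ≤ 4 := by
      calc (∑ X : Fin 3 → Bool, ((E X) * pauli (mvec ![n₁,n₂,n₃] X)).trace)
          ≤ ∑ X : Fin 3 → Bool, 2 * (E X).trace := Finset.sum_le_sum (fun X _ => hb X)
        _ = 2 * (∑ X : Fin 3 → Bool, E X).trace := by
            rw [← Finset.mul_sum, Matrix.trace_sum]
        _ = 4 := by
            rw [hSum, Matrix.trace_one]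
            norm_num
    have hfin : ((6 * η : ℝ) : ℂ) ≤ ((4 : ℝ) : ℂ) := by
      rw [hTeq] at hTle
      convert hTle using 2 <;> push_cast <;> ring
    rw [Complex.real_le_real] at hfin
    linarith
  · intro hle
    have hsum0 : n₁ + n₂ + n₃ = 0 := by
      have hz : (n₁ 0 + n₂ 0 + n₃ 0)*(n₁ 0 + n₂ 0 + n₃ 0)
          + (n₁ 1 + n₂ 1 + n₃ 1)*(n₁ 1 + n₂ 1 + n₃ 1)
          + (n₁ 2 + n₂ 2 + n₃ 2)*(n₁ 2 + n₂ 2 + n₃ 2) = 0 := by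
        have hn1' := hn1; have hn2' := hn2; have hn3' := hn3
        have h12' := h12; have h13' := h13; have h23' := h23
        simp only [dot3] at hn1' hn2' hn3' h12' h13' h23'
        linear_combination hn1' + hn2' + hn3' + 2*h12' + 2*h13' + 2*h23'
      have e0 : n₁ 0 + n₂ 0 + n₃ 0 = 0 := by
        have h' : (n₁ 0 + n₂ 0 + n₃ 0)^2 = 0 := le_antisymm
          (by nlinarith [hz, sq_nonneg (n₁ 1 + n₂ 1 + n₃ 1), sq_nonneg (n₁ 2 + n₂ 2 + n₃ 2)])
          (sq_nonneg _)
        exact sq_eq_zero_iff.mp h'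
      have e1 : n₁ 1 + n₂ 1 + n₃ 1 = 0 := by
        have h' : (n₁ 1 + n₂ 1 + n₃ 1)^2 = 0 := le_antisymm
          (by nlinarith [hz, sq_nonneg (n₁ 0 + n₂ 0 + n₃ 0), sq_nonneg (n₁ 2 + n₂ 2 + n₃ 2)])
          (sq_nonneg _)
        exact sq_eq_zero_iff.mp h'
      have e2 : n₁ 2 + n₂ 2 + n₃ 2 = 0 := by
        have h' : (n₁ 2 + n₂ 2 + n₃ 2)^2 = 0 := le_antisymm
          (by nlinarith [hz, sq_nonneg (n₁ 0 + n₂ 0 + n₃ 0), sq_nonneg (n₁ 1 + n₂ 1 + n₃ 1)])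
          (sq_nonneg _)
        exact sq_eq_zero_iff.mp h'
      funext i
      fin_cases i
      · simpa using e0
      · simpa using e1
      · simpa using e2
    have hm : ∀ b0 b1 b2 : Bool, mvec ![n₁,n₂,n₃] ![b0,b1,b2]
        = sgn b0 • n₁ + sgn b1 • n₂ + sgn b2 • n₃ := by
      intro b0 b1 b2
      simp [mvec, Fin.sum_univ_three]
    have hmv : ∀ X : Fin 3 → Bool, mvec ![n₁,n₂,n₃] X
        = sgn (X 0) • n₁ + sgn (X 1) • n₂ + sgn (X 2) • n₃ := by
      intro X
      simp [mvec, Fin.sum_univ_three]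
    have hsgnT : sgn true = (1:ℝ) := by norm_num [sgn]
    have hsgnF : sgn false = (-1:ℝ) := by norm_num [sgn]
    have hEposEq : ∀ n : Fin 3 → ℝ, Epos η n = ((1/2 : ℝ):ℂ) • (1:Mat2) + pauli ((η/2) • n) := by
      intro n
      rw [Epos, pauli_smul]
      push_cast
      module
    have hEnegEq : ∀ n : Fin 3 → ℝ, Eneg η n = ((1/2 : ℝ):ℂ) • (1:Mat2) + pauli ((-(η/2)) • n) := by
      intro n
      rw [Eneg, pauli_smul]
      push_cast
      module
    set F : (Fin 3 → Bool) → Mat2 := fun X =>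
      (((if X 0 = X 1 ∧ X 1 = X 2 then (0:ℝ) else 1/6) : ℝ) : ℂ) • (1:Mat2)
        + pauli ((η/8) • mvec ![n₁,n₂,n₃] X) with hF
    have hdc := dot_smul_comb n₁ n₂ n₃ hn1 hn2 hn3 h12 h13 h23 (η/8)
    have hFval : ∀ b0 b1 b2 : Bool, F ![b0,b1,b2]
        = ((if b0 = b1 ∧ b1 = b2 then (0:ℝ) else 1/6 : ℝ) : ℂ) • (1:Mat2)
          + pauli ((η/8) • (sgn b0 • n₁ + sgn b1 • n₂ + sgn b2 • n₃)) := by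
      intro b0 b1 b2
      rw [hF]
      simp [hm]
    have vFFF : F ![false,false,false] = ((0 : ℝ):ℂ) • (1:Mat2)
        + pauli ((η/8) • ((-1:ℝ) • n₁ + (-1:ℝ) • n₂ + (-1:ℝ) • n₃)) := by
      rw [hFval, hsgnF, if_pos (by simp)]
    have vFFT : F ![false,false,true] = ((1/6 : ℝ):ℂ) • (1:Mat2)
        + pauli ((η/8) • ((-1:ℝ) • n₁ + (-1:ℝ) • n₂ + (1:ℝ) • n₃)) := by
      rw [hFval, hsgnF, hsgnT, if_neg (by simp)]
    have vFTF : F ![false,true,false] = ((1/6 : ℝ):ℂ) • (1:Mat2)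
        + pauli ((η/8) • ((-1:ℝ) • n₁ + (1:ℝ) • n₂ + (-1:ℝ) • n₃)) := by
      rw [hFval, hsgnF, hsgnT, if_neg (by simp)]
    have vFTT : F ![false,true,true] = ((1/6 : ℝ):ℂ) • (1:Mat2)
        + pauli ((η/8) • ((-1:ℝ) • n₁ + (1:ℝ) • n₂ + (1:ℝ) • n₃)) := by
      rw [hFval, hsgnF, hsgnT, if_neg (by simp)]
    have vTFF : F ![true,false,false] = ((1/6 : ℝ):ℂ) • (1:Mat2)
        + pauli ((η/8) • ((1:ℝ) • n₁ + (-1:ℝ) • n₂ + (-1:ℝ) • n₃)) := by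
      rw [hFval, hsgnF, hsgnT, if_neg (by simp)]
    have vTFT : F ![true,false,true] = ((1/6 : ℝ):ℂ) • (1:Mat2)
        + pauli ((η/8) • ((1:ℝ) • n₁ + (-1:ℝ) • n₂ + (1:ℝ) • n₃)) := by
      rw [hFval, hsgnF, hsgnT, if_neg (by simp)]
    have vTTF : F ![true,true,false] = ((1/6 : ℝ):ℂ) • (1:Mat2)
        + pauli ((η/8) • ((1:ℝ) • n₁ + (1:ℝ) • n₂ + (-1:ℝ) • n₃)) := by
      rw [hFval, hsgnF, hsgnT, if_neg (by simp)]
    have vTTT : F ![true,true,true] = ((0 : ℝ):ℂ) • (1:Mat2)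
        + pauli ((η/8) • ((1:ℝ) • n₁ + (1:ℝ) • n₂ + (1:ℝ) • n₃)) := by
      rw [hFval, hsgnT, if_pos (by simp)]
    refine ⟨F, ?_, ?_, ?_, ?_⟩
    · -- each F X is an effect
      intro X
      simp only [hF]
      cases hb0 : X 0 <;> cases hb1 : X 1 <;> cases hb2 : X 2
      · -- FFF
        rw [hmv X, hb0, hb1, hb2, hsgnF]
        rw [if_pos (by simp)]
        have hneg : (-1:ℝ) • n₁ + (-1:ℝ) • n₂ + (-1:ℝ) • n₃ = -(n₁ + n₂ + n₃) := by module
        rw [hneg, hsum0, neg_zero, smul_zero, pauli_zero, add_zero, Complex.ofReal_zero, zero_smul]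
        exact ⟨Matrix.PosSemidef.zero, by simpa using (Matrix.PosSemidef.one (n := Fin 2) (R := ℂ))⟩
      · -- FFT
        rw [hmv X, hb0, hb1, hb2, hsgnF, hsgnT]
        rw [if_neg (by simp)]
        refine isEffect_of (1/6) _ (by norm_num) (by norm_num) ?_ ?_
        · rw [hdc (-1) (-1) 1 (by norm_num) (by norm_num) (by norm_num) (by norm_num)]
          nlinarith [hη0, hle]
        · rw [hdc (-1) (-1) 1 (by norm_num) (by norm_num) (by norm_num) (by norm_num)]
          nlinarith [hη0, hle]
      · -- FTF
        rw [hmv X, hb0, hb1, hb2, hsgnF, hsgnT]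
        rw [if_neg (by simp)]
        refine isEffect_of (1/6) _ (by norm_num) (by norm_num) ?_ ?_
        · rw [hdc (-1) 1 (-1) (by norm_num) (by norm_num) (by norm_num) (by norm_num)]
          nlinarith [hη0, hle]
        · rw [hdc (-1) 1 (-1) (by norm_num) (by norm_num) (by norm_num) (by norm_num)]
          nlinarith [hη0, hle]
      · -- FTT
        rw [hmv X, hb0, hb1, hb2, hsgnF, hsgnT]
        rw [if_neg (by simp)]
        refine isEffect_of (1/6) _ (by norm_num) (by norm_num) ?_ ?_
        · rw [hdc (-1) 1 1 (by norm_num) (by norm_num) (by norm_num) (by norm_num)]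
          nlinarith [hη0, hle]
        · rw [hdc (-1) 1 1 (by norm_num) (by norm_num) (by norm_num) (by norm_num)]
          nlinarith [hη0, hle]
      · -- TFF
        rw [hmv X, hb0, hb1, hb2, hsgnF, hsgnT]
        rw [if_neg (by simp)]
        refine isEffect_of (1/6) _ (by norm_num) (by norm_num) ?_ ?_
        · rw [hdc 1 (-1) (-1) (by norm_num) (by norm_num) (by norm_num) (by norm_num)]
          nlinarith [hη0, hle]
        · rw [hdc 1 (-1) (-1) (by norm_num) (by norm_num) (by norm_num) (by norm_num)]
          nlinarith [hη0, hle]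
      · -- TFT
        rw [hmv X, hb0, hb1, hb2, hsgnF, hsgnT]
        rw [if_neg (by simp)]
        refine isEffect_of (1/6) _ (by norm_num) (by norm_num) ?_ ?_
        · rw [hdc 1 (-1) 1 (by norm_num) (by norm_num) (by norm_num) (by norm_num)]
          nlinarith [hη0, hle]
        · rw [hdc 1 (-1) 1 (by norm_num) (by norm_num) (by norm_num) (by norm_num)]
          nlinarith [hη0, hle]
      · -- TTF
        rw [hmv X, hb0, hb1, hb2, hsgnF, hsgnT]
        rw [if_neg (by simp)]
        refine isEffect_of (1/6) _ (by norm_num) (by norm_num) ?_ ?_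
        · rw [hdc 1 1 (-1) (by norm_num) (by norm_num) (by norm_num) (by norm_num)]
          nlinarith [hη0, hle]
        · rw [hdc 1 1 (-1) (by norm_num) (by norm_num) (by norm_num) (by norm_num)]
          nlinarith [hη0, hle]
      · -- TTT
        rw [hmv X, hb0, hb1, hb2, hsgnT]
        rw [if_pos (by simp)]
        have hneg : (1:ℝ) • n₁ + (1:ℝ) • n₂ + (1:ℝ) • n₃ = n₁ + n₂ + n₃ := by module
        rw [hneg, hsum0, smul_zero, pauli_zero, add_zero, Complex.ofReal_zero, zero_smul]
        exact ⟨Matrix.PosSemidef.zero, by simpa using (Matrix.PosSemidef.one (n := Fin 2) (R := ℂ))⟩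
    · -- sums to one
      rw [sum_fin3_bool F, vFFF, vFFT, vFTF, vFTT, vTFF, vTFT, vTTF, vTTT, combine8]
      have hw : (η/8) • ((-1:ℝ) • n₁ + (-1:ℝ) • n₂ + (-1:ℝ) • n₃)
          + (η/8) • ((-1:ℝ) • n₁ + (-1:ℝ) • n₂ + (1:ℝ) • n₃)
          + (η/8) • ((-1:ℝ) • n₁ + (1:ℝ) • n₂ + (-1:ℝ) • n₃)
          + (η/8) • ((-1:ℝ) • n₁ + (1:ℝ) • n₂ + (1:ℝ) • n₃)
          + (η/8) • ((1:ℝ) • n₁ + (-1:ℝ) • n₂ + (-1:ℝ) • n₃)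
          + (η/8) • ((1:ℝ) • n₁ + (-1:ℝ) • n₂ + (1:ℝ) • n₃)
          + (η/8) • ((1:ℝ) • n₁ + (1:ℝ) • n₂ + (-1:ℝ) • n₃)
          + (η/8) • ((1:ℝ) • n₁ + (1:ℝ) • n₂ + (1:ℝ) • n₃) = (0 : Fin 3 → ℝ) := by
        module
      rw [hw, pauli_zero, add_zero]
      norm_num
    · -- positive marginals
      intro k
      fin_cases k
      · show (∑ X ∈ Finset.univ.filter (fun X : Fin 3 → Bool => X 0 = true), F X) = Epos η n₁
        rw [show (Finset.univ.filter fun X : Fin 3 → Bool => X 0 = true)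
            = ({![true,false,false], ![true,false,true], ![true,true,false], ![true,true,true]}
              : Finset (Fin 3 → Bool)) from by decide,
          Finset.sum_insert (by decide), Finset.sum_insert (by decide),
          Finset.sum_insert (by decide), Finset.sum_singleton,
          vTFF, vTFT, vTTF, vTTT, combine4r]
        rw [hEposEq]
        congr 1
        · norm_num
        · exact congrArg pauli (by module)
      · show (∑ X ∈ Finset.univ.filter (fun X : Fin 3 → Bool => X 1 = true), F X) = Epos η n₂
        rw [show (Finset.univ.filter fun X : Fin 3 → Bool => X 1 = true)
            = ({![false,true,false], ![false,true,true], ![true,true,false], ![true,true,true]}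
              : Finset (Fin 3 → Bool)) from by decide,
          Finset.sum_insert (by decide), Finset.sum_insert (by decide),
          Finset.sum_insert (by decide), Finset.sum_singleton,
          vFTF, vFTT, vTTF, vTTT, combine4r]
        rw [hEposEq]
        congr 1
        · norm_num
        · exact congrArg pauli (by module)
      · show (∑ X ∈ Finset.univ.filter (fun X : Fin 3 → Bool => X 2 = true), F X) = Epos η n₃
        rw [show (Finset.univ.filter fun X : Fin 3 → Bool => X 2 = true)
            = ({![false,false,true], ![false,true,true], ![true,false,true], ![true,true,true]}
              : Finset (Fin 3 → Bool)) from by decide,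
          Finset.sum_insert (by decide), Finset.sum_insert (by decide),
          Finset.sum_insert (by decide), Finset.sum_singleton,
          vFFT, vFTT, vTFT, vTTT, combine4r]
        rw [hEposEq]
        congr 1
        · norm_num
        · exact congrArg pauli (by module)
    · -- negative marginals
      intro k
      fin_cases k
      · show (∑ X ∈ Finset.univ.filter (fun X : Fin 3 → Bool => X 0 = false), F X) = Eneg η n₁
        rw [show (Finset.univ.filter fun X : Fin 3 → Bool => X 0 = false)
            = ({![false,false,false], ![false,false,true], ![false,true,false], ![false,true,true]}
              : Finset (Fin 3 → Bool)) from by decide,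
          Finset.sum_insert (by decide), Finset.sum_insert (by decide),
          Finset.sum_insert (by decide), Finset.sum_singleton,
          vFFF, vFFT, vFTF, vFTT, combine4r]
        rw [hEnegEq]
        congr 1
        · norm_num
        · exact congrArg pauli (by module)
      · show (∑ X ∈ Finset.univ.filter (fun X : Fin 3 → Bool => X 1 = false), F X) = Eneg η n₂
        rw [show (Finset.univ.filter fun X : Fin 3 → Bool => X 1 = false)
            = ({![false,false,false], ![false,false,true], ![true,false,false], ![true,false,true]}
              : Finset (Fin 3 → Bool)) from by decide,
          Finset.sum_insert (by decide), Finset.sum_insert (by decide),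
          Finset.sum_insert (by decide), Finset.sum_singleton,
          vFFF, vFFT, vTFF, vTFT, combine4r]
        rw [hEnegEq]
        congr 1
        · norm_num
        · exact congrArg pauli (by module)
      · show (∑ X ∈ Finset.univ.filter (fun X : Fin 3 → Bool => X 2 = false), F X) = Eneg η n₃
        rw [show (Finset.univ.filter fun X : Fin 3 → Bool => X 2 = false)
            = ({![false,false,false], ![false,true,false], ![true,false,false], ![true,true,false]}
              : Finset (Fin 3 → Bool)) from by decide,
          Finset.sum_insert (by decide), Finset.sum_insert (by decide),
          Finset.sum_insert (by decide), Finset.sum_singleton,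
          vFFF, vFTF, vTFF, vTTF, combine4r]
        rw [hEnegEq]
        congr 1
        · norm_num
        · exact congrArg pauli (by module)

end
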